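/- Let f : [0,∞) → ℝ be continuously differentiable and suppose f' is eventually monotone and eventually nonvanishing (there is x₀ ≥ 0 such that f' is monotone and nonzero on [x₀, ∞)). Then there exist C > 0 and N₀ ∈ ℕ such that for all integers N ≥ N₀: | Σ_{n=0}^{N−1} e(f(n)) | ≤ C ( 1/|f'(N)| + |f(N)| ). -/

import Mathlib

open Filter Topology

noncomputable section

/-- `e x = exp(2 π i x)`. -/
def e' (x : ℝ) : ℂ := Complex.exp (2 * (Real.pi : ℂ) * Complex.I * (x : ℂ))

open intervalIntegral Set

lemma e'_norm (x : ℝ) : ‖e' x‖ = 1 := by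
  simp [e', Complex.norm_exp]

lemma e'_neg (x : ℝ) : e' (-x) = (starRingEnd ℂ) (e' x) := by
  rw [e', e', ← Complex.exp_conj]
  congr 1
  simp [Complex.ext_iff]

lemma hasDerivAt_e'_comp (f : ℝ → ℝ) (g : ℝ) (t : ℝ) (h : HasDerivAt f g t) :
    HasDerivAt (fun s => e' (f s)) (2 * Real.pi * Complex.I * g * e' (f t)) t := by
  have h1 : HasDerivAt (fun s => ((f s : ℂ))) (g : ℂ) t := h.ofReal_comp
  have h2 := (h1.const_mul (2 * (Real.pi:ℂ) * Complex.I)).cexp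
  convert h2 using 1
  · rfl
  rw [show e' (f t) = Complex.exp (2 * (Real.pi:ℂ) * Complex.I * (f t : ℂ)) from rfl]; ring

lemma intervalIntegral_conj (f : ℝ → ℂ) (a b : ℝ) :
    ∫ t in a..b, (starRingEnd ℂ) (f t) = (starRingEnd ℂ) (∫ t in a..b, f t) := by
  simp [intervalIntegral, ← integral_conj]

/-- Mollification core: bound for `∫ W·F'` with `W` monotone continuous and `‖F‖ = 1`. -/
lemma moll (W : ℝ → ℝ) (hWc : Continuous W) (hWm : Monotone W)
    (F F' : ℝ → ℂ) (hF : ∀ t, HasDerivAt F (F' t) t) (hF'c : Continuous F')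
    (hFn : ∀ t, ‖F t‖ = 1) (a b : ℝ) (hab : a ≤ b) :
    ‖∫ t in a..b, (W t : ℂ) * F' t‖ ≤ 2 * (|W a| + |W b|) := by
  have hFc : Continuous F := continuous_iff_continuousAt.2 fun t => (hF t).continuousAt
  set V : ℝ → ℝ := fun u => ∫ s in (0:ℝ)..u, W s with hV_def
  have hV : ∀ u, HasDerivAt V (W u) u := fun u =>
    intervalIntegral.integral_hasDerivAt_right (hWc.intervalIntegrable 0 u)
      (hWc.stronglyMeasurableAtFilter _ _) hWc.continuousAt
  set ε : ℕ → ℝ := fun k => 1 / (k + 1 : ℝ) with hε_def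
  have hεpos : ∀ k, 0 < ε k := fun k => by positivity
  have hεle : ∀ k, ε k ≤ 1 := fun k => by
    rw [hε_def]
    rw [div_le_one (by positivity)]
    simp
  set u : ℕ → ℝ → ℝ := fun k t => ((k:ℝ) + 1) * (V (t + ε k) - V t) with hu_def
  set u' : ℕ → ℝ → ℝ := fun k t => ((k:ℝ) + 1) * (W (t + ε k) - W t) with hu'_def
  have hu : ∀ k t, HasDerivAt (u k) (u' k t) t := by
    intro k t
    have h1 : HasDerivAt (fun t => V (t + ε k)) (W (t + ε k)) t := by
      have := (hV (t + ε k)).comp t ((hasDerivAt_id t).add_const (ε k))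
      simpa [Function.comp_def] using this
    exact ((h1.sub (hV t)).const_mul _)
  have hVint : ∀ t k, V (t + ε k) - V t = ∫ s in t..(t + ε k), W s := by
    intro t k
    rw [hV_def]
    exact intervalIntegral.integral_interval_sub_left (hWc.intervalIntegrable _ _)
      (hWc.intervalIntegrable _ _)
  have hu_lb : ∀ k t, W t ≤ u k t := by
    intro k t
    rw [hu_def]
    simp only
    rw [hVint t k]
    have h1 : (ε k) * W t ≤ ∫ s in t..(t + ε k), W s := by
      have := intervalIntegral.integral_mono_on (a := t) (b := t + ε k)
        (μ := MeasureTheory.volume) (by linarith [hεpos k])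
        (_root_.intervalIntegrable_const (c := W t)) (hWc.intervalIntegrable _ _)
        (fun s hs => hWm hs.1)
      simpa using this
    have hk1 : (0:ℝ) < (k:ℝ) + 1 := by positivity
    have hεk : ε k = 1 / ((k:ℝ)+1) := rfl
    rw [hεk] at h1 ⊢
    rw [div_mul_eq_mul_div, one_mul] at h1
    have h2 : ((k:ℝ)+1) * (W t / ((k:ℝ)+1)) = W t := by field_simp
    nlinarith [mul_le_mul_of_nonneg_left h1 hk1.le]
  have hu_ub : ∀ k t, u k t ≤ W (t + ε k) := by
    intro k t
    rw [hu_def]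
    simp only
    rw [hVint t k]
    have h1 : (∫ s in t..(t + ε k), W s) ≤ (ε k) * W (t + ε k) := by
      have := intervalIntegral.integral_mono_on (a := t) (b := t + ε k)
        (μ := MeasureTheory.volume) (by linarith [hεpos k])
        (hWc.intervalIntegrable _ _) (_root_.intervalIntegrable_const (c := W (t + ε k)))
        (fun s hs => hWm hs.2)
      simpa using this
    have hk1 : (0:ℝ) < (k:ℝ) + 1 := by positivity
    have hεk : ε k = 1 / ((k:ℝ)+1) := rfl
    rw [hεk] at h1 ⊢
    rw [div_mul_eq_mul_div, one_mul] at h1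
    have h2 : ((k:ℝ)+1) * (W (t + 1/((k:ℝ)+1)) / ((k:ℝ)+1)) = W (t + 1/((k:ℝ)+1)) := by
      field_simp
    nlinarith [mul_le_mul_of_nonneg_left h1 hk1.le]
  have hu'c : ∀ k, Continuous (u' k) :=
    fun k => continuous_const.mul ((hWc.comp (continuous_id.add continuous_const)).sub hWc)
  have hu'nn : ∀ k t, 0 ≤ u' k t := by
    intro k t
    rw [hu'_def]
    simp only
    have := hWm (le_of_lt (lt_add_of_pos_right t (hεpos k)))
    have hk1 : (0:ℝ) ≤ (k:ℝ) + 1 := by positivity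
    nlinarith
  have hibp : ∀ k, ‖∫ t in a..b, ((u k t : ℝ) : ℂ) * F' t‖ ≤ 2 * (|u k a| + |u k b|) := by
    intro k
    have h1 : (∫ t in a..b, ((u k t : ℝ) : ℂ) * F' t)
        = (u k b : ℂ) * F b - (u k a : ℂ) * F a - ∫ t in a..b, ((u' k t : ℝ) : ℂ) * F t := by
      apply intervalIntegral.integral_mul_deriv_eq_deriv_mul
        (u' := fun t => ((u' k t : ℝ) : ℂ)) (v' := F')
      · exact fun x _ => (hu k x).ofReal_comp
      · exact fun x _ => hF x
      · exact ((Complex.continuous_ofReal.comp (hu'c k)).intervalIntegrable _ _)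
      · exact (hF'c.intervalIntegrable _ _)
    have h2 : ‖∫ t in a..b, ((u' k t : ℝ) : ℂ) * F t‖ ≤ u k b - u k a := by
      have h3 : ‖∫ t in a..b, ((u' k t : ℝ) : ℂ) * F t‖
          ≤ ∫ t in a..b, ‖((u' k t : ℝ) : ℂ) * F t‖ :=
        intervalIntegral.norm_integral_le_integral_norm hab
      have h4 : (∫ t in a..b, ‖((u' k t : ℝ) : ℂ) * F t‖) = ∫ t in a..b, u' k t := by
        apply intervalIntegral.integral_congr
        intro t _
        show ‖((u' k t : ℝ) : ℂ) * F t‖ = u' k t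
        rw [norm_mul, hFn t, mul_one, Complex.norm_real, Real.norm_eq_abs,
          abs_of_nonneg (hu'nn k t)]
      have h5 : (∫ t in a..b, u' k t) = u k b - u k a :=
        intervalIntegral.integral_eq_sub_of_hasDerivAt (fun t _ => hu k t)
          ((hu'c k).intervalIntegrable _ _)
      rw [h4, h5] at h3
      exact h3
    rw [h1]
    have e1 : ‖(u k b : ℂ) * F b‖ = |u k b| := by
      rw [norm_mul, hFn b, mul_one, Complex.norm_real, Real.norm_eq_abs]
    have e2 : ‖(u k a : ℂ) * F a‖ = |u k a| := by
      rw [norm_mul, hFn a, mul_one, Complex.norm_real, Real.norm_eq_abs]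
    calc ‖(u k b : ℂ) * F b - (u k a : ℂ) * F a - ∫ t in a..b, ((u' k t : ℝ) : ℂ) * F t‖
        ≤ ‖(u k b : ℂ) * F b - (u k a : ℂ) * F a‖ + ‖∫ t in a..b, ((u' k t : ℝ) : ℂ) * F t‖ :=
          norm_sub_le _ _
      _ ≤ (‖(u k b : ℂ) * F b‖ + ‖(u k a : ℂ) * F a‖) + (u k b - u k a) := by
          gcongr; exact norm_sub_le _ _
      _ = (|u k b| + |u k a|) + (u k b - u k a) := by rw [e1, e2]
      _ ≤ 2 * (|u k a| + |u k b|) := by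
          have := le_abs_self (u k b); have := neg_abs_le (u k a); linarith
  have huW : ∀ t, Tendsto (fun k => u k t) atTop (𝓝 (W t)) := by
    intro t
    have h1 : Tendsto (fun k => W (t + ε k)) atTop (𝓝 (W t)) := by
      have h2 : Tendsto (fun k : ℕ => t + ε k) atTop (𝓝 t) := by
        show Tendsto (fun k : ℕ => t + 1/((k:ℝ)+1)) atTop (𝓝 t)
        have : Tendsto (fun n : ℕ => 1 / ((n : ℝ) + 1)) atTop (𝓝 0) :=
          tendsto_one_div_add_atTop_nhds_zero_nat
        have h3 := tendsto_const_nhds (x := t) (f := atTop (α := ℕ)) |>.add this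
        simpa using h3
      exact (hWc.continuousAt.tendsto).comp h2
    exact tendsto_of_tendsto_of_tendsto_of_le_of_le tendsto_const_nhds h1
      (fun k => hu_lb k t) (fun k => hu_ub k t)
  have hVc : Continuous V := continuous_iff_continuousAt.2 fun t => (hV t).continuousAt
  have huc : ∀ k, Continuous (u k) :=
    fun k => continuous_const.mul ((hVc.comp (continuous_id.add continuous_const)).sub hVc)
  have hdct : Tendsto (fun k => ∫ t in a..b, ((u k t : ℝ) : ℂ) * F' t) atTop
      (𝓝 (∫ t in a..b, (W t : ℂ) * F' t)) := by
    apply intervalIntegral.tendsto_integral_filter_of_dominated_convergence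
      (bound := fun t => (|W a| + |W (b + 1)|) * ‖F' t‖)
    · exact Filter.Eventually.of_forall fun k =>
        ((Complex.continuous_ofReal.comp (huc k)).mul hF'c).aestronglyMeasurable.restrict
    · apply Filter.Eventually.of_forall
      intro k
      apply MeasureTheory.ae_of_all
      intro x hx
      rw [Set.uIoc_of_le hab] at hx
      have hxa : a ≤ x := le_of_lt hx.1
      have hxb : x ≤ b := hx.2
      have hb1 : W (x + ε k) ≤ W (b + 1) := hWm (by linarith [hεle k])
      have hWax : W a ≤ u k x := le_trans (hWm hxa) (hu_lb k x)
      have hux : u k x ≤ W (b + 1) := le_trans (hu_ub k x) hb1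
      have habs : |u k x| ≤ |W a| + |W (b + 1)| := by
        rw [abs_le]
        constructor
        · linarith [neg_abs_le (W a), abs_nonneg (W (b+1))]
        · linarith [le_abs_self (W (b+1)), abs_nonneg (W a)]
      rw [norm_mul, Complex.norm_real, Real.norm_eq_abs]
      exact mul_le_mul_of_nonneg_right habs (norm_nonneg _)
    · exact ((continuous_const.mul hF'c.norm).intervalIntegrable _ _)
    · apply MeasureTheory.ae_of_all
      intro x _
      exact ((Complex.continuous_ofReal.tendsto _).comp (huW x)).mul tendsto_const_nhds
  have hlim1 : Tendsto (fun k => ‖∫ t in a..b, ((u k t : ℝ) : ℂ) * F' t‖) atTop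
      (𝓝 ‖∫ t in a..b, (W t : ℂ) * F' t‖) := hdct.norm
  have hlim2 : Tendsto (fun k => 2 * (|u k a| + |u k b|)) atTop
      (𝓝 (2 * (|W a| + |W b|))) :=
    (((huW a).abs.add (huW b).abs).const_mul 2)
  exact le_of_tendsto_of_tendsto' hlim1 hlim2 hibp

/-- First derivative test, monotone `(deriv f)⁻¹` case. -/
lemma lemO_mono (f : ℝ → ℝ) (hf : ContDiff ℝ 1 f) (c a b : ℝ) (hca : c ≤ a) (hab : a ≤ b)
    (hne : ∀ x, c ≤ x → deriv f x ≠ 0)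
    (hw : MonotoneOn (fun t => (deriv f t)⁻¹) (Set.Ici c)) :
    ‖∫ t in a..b, e' (f t)‖ ≤ |(deriv f a)⁻¹| + |(deriv f b)⁻¹| := by
  set g := deriv f with hg_def
  have hg : Continuous g := hf.continuous_deriv le_rfl
  have hfd : ∀ t, HasDerivAt f (g t) t :=
    fun t => ((hf.differentiable one_ne_zero) t).hasDerivAt
  set F : ℝ → ℂ := fun t => e' (f t) with hF_def
  set F' : ℝ → ℂ := fun t => 2 * Real.pi * Complex.I * (g t) * F t with hF'_def
  have hF : ∀ t, HasDerivAt F (F' t) t := fun t => hasDerivAt_e'_comp f (g t) t (hfd t)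
  have hFc : Continuous F := by
    unfold F
    exact Complex.continuous_exp.comp
      (continuous_const.mul (Complex.continuous_ofReal.comp (hf.continuous)))
  have hF'c : Continuous F' := by
    unfold F'
    exact (continuous_const.mul (Complex.continuous_ofReal.comp hg)).mul hFc
  set W : ℝ → ℝ := fun t => (g (max t c))⁻¹ with hW_def
  have hWne : ∀ t, g (max t c) ≠ 0 := fun t => hne _ (le_max_right _ _)
  have hWc : Continuous W := (hg.comp (continuous_id.max continuous_const)).inv₀ hWne
  have hWm : Monotone W := by
    intro s t hst
    exact hw (le_max_right s c) (le_max_right t c) (max_le_max hst le_rfl)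
  have hWa : W a = (g a)⁻¹ := by rw [hW_def]; simp [max_eq_left hca]
  have hWb : W b = (g b)⁻¹ := by rw [hW_def]; simp [max_eq_left (hca.trans hab)]
  have key : ∀ t, c ≤ t → (W t : ℂ) * F' t = 2 * Real.pi * Complex.I * F t := by
    intro t hct
    have hWt : W t = (g t)⁻¹ := by rw [hW_def]; simp [max_eq_left hct]
    rw [hWt, hF'_def]
    have : ((g t : ℝ) : ℂ) ≠ 0 := by exact_mod_cast hne t hct
    push_cast
    field_simp
  have main : ‖∫ t in a..b, (W t : ℂ) * F' t‖ ≤ 2 * (|W a| + |W b|) :=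
    moll W hWc hWm F F' hF hF'c (fun t => e'_norm (f t)) a b hab
  have hint : (∫ t in a..b, (W t : ℂ) * F' t) = 2 * Real.pi * Complex.I * ∫ t in a..b, F t := by
    rw [← intervalIntegral.integral_const_mul]
    apply intervalIntegral.integral_congr
    intro t ht
    rw [Set.uIcc_of_le hab] at ht
    exact key t (hca.trans ht.1)
  rw [hint, norm_mul] at main
  have hnorm2pi : ‖2 * (Real.pi:ℂ) * Complex.I‖ = 2 * Real.pi := by
    simp [norm_mul, Complex.norm_real, abs_of_nonneg Real.pi_pos.le]
  rw [hnorm2pi] at main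
  have hπ : (1:ℝ) ≤ Real.pi := by linarith [Real.pi_gt_three]
  rw [← hWa, ← hWb]
  nlinarith [norm_nonneg (∫ t in a..b, F t), abs_nonneg (W a), abs_nonneg (W b)]

/-- First derivative test, both cases. -/
lemma lemO (f : ℝ → ℝ) (hf : ContDiff ℝ 1 f) (c a b : ℝ) (hca : c ≤ a) (hab : a ≤ b)
    (hne : ∀ x, c ≤ x → deriv f x ≠ 0)
    (hw : MonotoneOn (fun t => (deriv f t)⁻¹) (Set.Ici c)
        ∨ AntitoneOn (fun t => (deriv f t)⁻¹) (Set.Ici c)) :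
    ‖∫ t in a..b, e' (f t)‖ ≤ |(deriv f a)⁻¹| + |(deriv f b)⁻¹| := by
  rcases hw with hw | hw
  · exact lemO_mono f hf c a b hca hab hne hw
  · set f1 : ℝ → ℝ := fun t => -f t with hf1_def
    have hf1 : ContDiff ℝ 1 f1 := hf.neg
    have hd1 : ∀ t, deriv f1 t = -(deriv f t) := by
      intro t
      rw [hf1_def]
      exact deriv.neg
    have hne1 : ∀ x, c ≤ x → deriv f1 x ≠ 0 := by
      intro x hx
      rw [hd1 x]
      simpa using hne x hx
    have hw1 : MonotoneOn (fun t => (deriv f1 t)⁻¹) (Set.Ici c) := by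
      intro s hs t ht hst
      simp only [hd1, inv_neg]
      have := hw hs ht hst
      linarith
    have := lemO_mono f1 hf1 c a b hca hab hne1 hw1
    have heq : (∫ t in a..b, e' (f1 t)) = (starRingEnd ℂ) (∫ t in a..b, e' (f t)) := by
      rw [← intervalIntegral_conj]
      apply intervalIntegral.integral_congr
      intro t _
      show e' (-f t) = (starRingEnd ℂ) (e' (f t))
      exact e'_neg (f t)
    rw [heq] at this
    rw [RCLike.norm_conj] at this
    simpa [hd1, inv_neg, abs_neg] using this

/-- Comparison of the sum with the integral. -/
lemma lemS (f : ℝ → ℝ) (hf : ContDiff ℝ 1 f) (A N : ℕ) (hAN : A ≤ N) :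
    ‖(∑ n ∈ Finset.Ico A N, e' (f n)) - ∫ t in (A:ℝ)..(N:ℝ), e' (f t)‖
      ≤ 2 * Real.pi * ∫ t in (A:ℝ)..(N:ℝ), |deriv f t| := by
  set g := deriv f with hg_def
  have hg : Continuous g := hf.continuous_deriv le_rfl
  have hfd : ∀ t, HasDerivAt f (g t) t :=
    fun t => ((hf.differentiable one_ne_zero) t).hasDerivAt
  set F : ℝ → ℂ := fun t => e' (f t) with hF_def
  set F' : ℝ → ℂ := fun t => 2 * Real.pi * Complex.I * (g t) * F t with hF'_def
  have hF : ∀ t, HasDerivAt F (F' t) t := fun t => hasDerivAt_e'_comp f (g t) t (hfd t)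
  have hFc : Continuous F := continuous_iff_continuousAt.2 fun t => (hF t).continuousAt
  have hF'c : Continuous F' := by
    unfold F'
    exact (continuous_const.mul (Complex.continuous_ofReal.comp hg)).mul hFc
  have hF'norm : ∀ t, ‖F' t‖ = 2 * Real.pi * |g t| := by
    intro t
    rw [hF'_def]
    simp only
    rw [norm_mul, norm_mul, norm_mul]
    rw [e'_norm]
    simp [Complex.norm_real, abs_of_nonneg Real.pi_pos.le]
  -- split integral into unit intervals
  have hsplitF : (∑ k ∈ Finset.Ico A N, ∫ t in (k:ℝ)..((k:ℝ)+1), F t)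
      = ∫ t in (A:ℝ)..(N:ℝ), F t := by
    have := intervalIntegral.sum_integral_adjacent_intervals_Ico (a := fun k : ℕ => (k:ℝ))
      (μ := MeasureTheory.volume) (f := F) hAN
      (fun k _ => hFc.intervalIntegrable _ _)
    convert this using 2 with k
    push_cast
    ring
  have hsplitG : (∑ k ∈ Finset.Ico A N, ∫ t in (k:ℝ)..((k:ℝ)+1), ‖F' t‖)
      = ∫ t in (A:ℝ)..(N:ℝ), ‖F' t‖ := by
    have := intervalIntegral.sum_integral_adjacent_intervals_Ico (a := fun k : ℕ => (k:ℝ))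
      (μ := MeasureTheory.volume) (f := fun t => ‖F' t‖) hAN
      (fun k _ => hF'c.norm.intervalIntegrable _ _)
    convert this using 2 with k
    push_cast
    ring
  -- per-interval bound
  have hterm : ∀ k : ℕ, ‖e' (f k) - ∫ t in (k:ℝ)..((k:ℝ)+1), F t‖
      ≤ ∫ t in (k:ℝ)..((k:ℝ)+1), ‖F' t‖ := by
    intro k
    set Bk := ∫ t in (k:ℝ)..((k:ℝ)+1), ‖F' t‖ with hBk_def
    have hk1 : (k:ℝ) ≤ (k:ℝ) + 1 := by linarith
    have hconst : (∫ t in (k:ℝ)..((k:ℝ)+1), F (k:ℝ)) = F (k:ℝ) := by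
      rw [intervalIntegral.integral_const]
      simp
    have hdiff : e' (f k) - (∫ t in (k:ℝ)..((k:ℝ)+1), F t)
        = ∫ t in (k:ℝ)..((k:ℝ)+1), (F (k:ℝ) - F t) := by
      rw [intervalIntegral.integral_sub (intervalIntegrable_const) (hFc.intervalIntegrable _ _),
        hconst]
    rw [hdiff]
    have h1 : ‖∫ t in (k:ℝ)..((k:ℝ)+1), (F (k:ℝ) - F t)‖
        ≤ ∫ t in (k:ℝ)..((k:ℝ)+1), ‖F (k:ℝ) - F t‖ :=
      intervalIntegral.norm_integral_le_integral_norm hk1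
    have h2 : (∫ t in (k:ℝ)..((k:ℝ)+1), ‖F (k:ℝ) - F t‖)
        ≤ ∫ t in (k:ℝ)..((k:ℝ)+1), Bk := by
      apply intervalIntegral.integral_mono_on hk1
      · exact ((continuous_const.sub hFc).norm.intervalIntegrable _ _)
      · exact _root_.intervalIntegrable_const
      · intro t ht
        have hFtk : F t - F (k:ℝ) = ∫ s in (k:ℝ)..t, F' s :=
          (intervalIntegral.integral_eq_sub_of_hasDerivAt (fun s _ => hF s)
            (hF'c.intervalIntegrable _ _)).symm
        have h3 : ‖F (k:ℝ) - F t‖ = ‖F t - F (k:ℝ)‖ := norm_sub_rev _ _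
        rw [h3, hFtk]
        calc ‖∫ s in (k:ℝ)..t, F' s‖ ≤ ∫ s in (k:ℝ)..t, ‖F' s‖ :=
              intervalIntegral.norm_integral_le_integral_norm ht.1
          _ ≤ Bk := by
              apply intervalIntegral.integral_mono_interval le_rfl ht.1 ht.2
              · exact MeasureTheory.ae_of_all _ (fun s => norm_nonneg _)
              · exact hF'c.norm.intervalIntegrable _ _
    have h4 : (∫ t in (k:ℝ)..((k:ℝ)+1), Bk) = Bk := by
      rw [intervalIntegral.integral_const]
      simp
    rw [h4] at h2
    exact h1.trans h2
  -- assemble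
  have hsum : (∑ n ∈ Finset.Ico A N, e' (f n)) - (∫ t in (A:ℝ)..(N:ℝ), F t)
      = ∑ k ∈ Finset.Ico A N, (e' (f k) - ∫ t in (k:ℝ)..((k:ℝ)+1), F t) := by
    rw [Finset.sum_sub_distrib, hsplitF]
  have hfinal : ‖(∑ n ∈ Finset.Ico A N, e' (f n)) - ∫ t in (A:ℝ)..(N:ℝ), F t‖
      ≤ ∫ t in (A:ℝ)..(N:ℝ), ‖F' t‖ := by
    rw [hsum, ← hsplitG]
    exact (norm_sum_le _ _).trans (Finset.sum_le_sum fun k _ => hterm k)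
  have hgnorm : (∫ t in (A:ℝ)..(N:ℝ), ‖F' t‖)
      = 2 * Real.pi * ∫ t in (A:ℝ)..(N:ℝ), |g t| := by
    rw [← intervalIntegral.integral_const_mul]
    exact intervalIntegral.integral_congr fun t _ => hF'norm t
  rw [hgnorm] at hfinal
  exact hfinal

/-- Constant sign of a continuous nonvanishing function on a half-line. -/
lemma lemSign (g : ℝ → ℝ) (hgc : Continuous g) (c : ℝ) (hne : ∀ x, c ≤ x → g x ≠ 0) :
    (∀ x, c ≤ x → 0 < g x) ∨ (∀ x, c ≤ x → g x < 0) := by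
  rcases lt_or_gt_of_ne (hne c le_rfl) with h | h
  · right
    intro x hx
    by_contra hpos
    push_neg at hpos
    have hx0 : 0 < g x := lt_of_le_of_ne hpos (Ne.symm (hne x hx))
    obtain ⟨y, hy, hy0⟩ := intermediate_value_Icc hx hgc.continuousOn
      (Set.mem_Icc.2 ⟨h.le, hx0.le⟩)
    exact hne y (hy.1) hy0
  · left
    intro x hx
    by_contra hneg
    push_neg at hneg
    have hx0 : g x < 0 := lt_of_le_of_ne hneg (hne x hx)
    obtain ⟨y, hy, hy0⟩ := intermediate_value_Icc' hx hgc.continuousOn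
      (Set.mem_Icc.2 ⟨hx0.le, h.le⟩)
    exact hne y (hy.1) hy0

lemma lemVar (f : ℝ → ℝ) (hf : ContDiff ℝ 1 f) (c : ℝ)
    (hsign : (∀ x, c ≤ x → 0 < deriv f x) ∨ (∀ x, c ≤ x → deriv f x < 0))
    (a b : ℝ) (hca : c ≤ a) (hab : a ≤ b) :
    (∫ t in a..b, |deriv f t|) ≤ |f b| + |f a| := by
  have hg : Continuous (deriv f) := hf.continuous_deriv le_rfl
  have hftc : (∫ t in a..b, deriv f t) = f b - f a :=
    intervalIntegral.integral_deriv_eq_sub (fun x _ => (hf.differentiable one_ne_zero) x)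
      (hg.intervalIntegrable _ _)
  rcases hsign with hs | hs
  · have heq : (∫ t in a..b, |deriv f t|) = ∫ t in a..b, deriv f t := by
      apply intervalIntegral.integral_congr
      intro t ht
      rw [uIcc_of_le hab] at ht
      exact abs_of_pos (hs t (hca.trans ht.1))
    rw [heq, hftc]
    linarith [le_abs_self (f b), neg_abs_le (f a)]
  · have heq : (∫ t in a..b, |deriv f t|) = ∫ t in a..b, -(deriv f t) := by
      apply intervalIntegral.integral_congr
      intro t ht
      rw [uIcc_of_le hab] at ht
      exact abs_of_neg (hs t (hca.trans ht.1))
    rw [heq, intervalIntegral.integral_neg, hftc]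
    linarith [le_abs_self (f a), neg_abs_le (f b)]

lemma lemW (g : ℝ → ℝ) (c : ℝ)
    (hm : MonotoneOn g (Set.Ici c) ∨ AntitoneOn g (Set.Ici c))
    (hsign : (∀ x, c ≤ x → 0 < g x) ∨ (∀ x, c ≤ x → g x < 0)) :
    MonotoneOn (fun t => (g t)⁻¹) (Set.Ici c) ∨ AntitoneOn (fun t => (g t)⁻¹) (Set.Ici c) := by
  rcases hm with hm | hm <;> rcases hsign with hs | hs
  · right; intro s hs' t ht hst
    exact inv_anti₀ (hs s hs') (hm hs' ht hst)
  · right; intro s hs' t ht hst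
    have h1 := one_div_le_one_div_of_neg_of_le (hs t ht) (hm hs' ht hst)
    simpa [one_div] using h1
  · left; intro s hs' t ht hst
    exact inv_anti₀ (hs t ht) (hm hs' ht hst)
  · left; intro s hs' t ht hst
    have h1 := one_div_le_one_div_of_neg_of_le (hs s hs') (hm hs' ht hst)
    simpa [one_div] using h1

lemma lemLB (f : ℝ → ℝ) (hf : ContDiff ℝ 1 f) (c : ℝ)
    (hm : MonotoneOn (deriv f) (Set.Ici c) ∨ AntitoneOn (deriv f) (Set.Ici c))
    (hsign : (∀ x, c ≤ x → 0 < deriv f x) ∨ (∀ x, c ≤ x → deriv f x < 0)) :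
    ∃ x₄ : ℝ, c ≤ x₄ ∧ ∀ x : ℝ, x₄ ≤ x → 1 ≤ 1 / |deriv f x| + |f x| := by
  set g := deriv f with hg_def
  have hg : Continuous g := hf.continuous_deriv le_rfl
  set m : ℝ → ℝ := fun t => |g t| with hm_def
  have hmpos : ∀ x, c ≤ x → 0 < m x := by
    intro x hx
    rcases hsign with hs | hs
    · exact abs_pos.2 (hs x hx).ne'
    · exact abs_pos.2 (hs x hx).ne
  have hm' : MonotoneOn m (Set.Ici c) ∨ AntitoneOn m (Set.Ici c) := by
    rcases hm with hmm | hmm <;> rcases hsign with hs | hs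
    · left; intro s hs' t ht hst
      rw [hm_def]; simp only
      rw [abs_of_pos (hs s hs'), abs_of_pos (hs t ht)]
      exact hmm hs' ht hst
    · right; intro s hs' t ht hst
      rw [hm_def]; simp only
      rw [abs_of_neg (hs s hs'), abs_of_neg (hs t ht)]
      exact neg_le_neg (hmm hs' ht hst)
    · right; intro s hs' t ht hst
      rw [hm_def]; simp only
      rw [abs_of_pos (hs s hs'), abs_of_pos (hs t ht)]
      exact hmm hs' ht hst
    · left; intro s hs' t ht hst
      rw [hm_def]; simp only
      rw [abs_of_neg (hs s hs'), abs_of_neg (hs t ht)]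
      exact neg_le_neg (hmm hs' ht hst)
  by_cases hsmall : ∃ x₂, c ≤ x₂ ∧ ∀ x, x₂ ≤ x → m x ≤ 1
  · obtain ⟨x₂, hcx₂, hx₂⟩ := hsmall
    refine ⟨x₂, hcx₂, fun x hx => ?_⟩
    have h1 : 0 < m x := hmpos x (hcx₂.trans hx)
    have h2 : 1 ≤ 1 / m x := by
      rw [le_div_iff₀ h1]
      simpa using hx₂ x hx
    have h3 : (0:ℝ) ≤ |f x| := abs_nonneg _
    have : (1:ℝ) / m x = 1 / |g x| := rfl
    linarith
  · push_neg at hsmall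
    have hbig : ∃ x₃, c ≤ x₃ ∧ ∀ y, x₃ ≤ y → 1 ≤ m y := by
      rcases hm' with hmono | hanti
      · obtain ⟨x, hx, h1x⟩ := hsmall c le_rfl
        exact ⟨x, hx, fun y hy => (h1x.le.trans (hmono (Set.mem_Ici.2 hx)
          (Set.mem_Ici.2 (hx.trans hy)) hy))⟩
      · refine ⟨c, le_rfl, fun y hy => ?_⟩
        obtain ⟨x, hxy, h1x⟩ := hsmall y hy
        exact h1x.le.trans (hanti (Set.mem_Ici.2 hy) (Set.mem_Ici.2 (hy.trans hxy)) hxy)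
    obtain ⟨x₃, hcx₃, hx₃⟩ := hbig
    refine ⟨x₃ + |f x₃| + 1, by linarith [abs_nonneg (f x₃)], ?_⟩
    intro x hx
    have hx₃x : x₃ ≤ x := by linarith [abs_nonneg (f x₃)]
    have hftc : (∫ t in x₃..x, g t) = f x - f x₃ :=
      intervalIntegral.integral_deriv_eq_sub (fun y _ => (hf.differentiable one_ne_zero) y)
        (hg.intervalIntegrable _ _)
    have h1fx : 1 ≤ |f x| := by
      rcases hsign with hs | hs
      · have hlow : (∫ t in x₃..x, (1:ℝ)) ≤ ∫ t in x₃..x, g t := by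
          apply intervalIntegral.integral_mono_on hx₃x
            (_root_.intervalIntegrable_const) (hg.intervalIntegrable _ _)
          intro t ht
          have := hx₃ t ht.1
          rw [hm_def] at this; simp only at this
          rwa [abs_of_pos (hs t (hcx₃.trans ht.1))] at this
        rw [hftc] at hlow
        simp only [intervalIntegral.integral_const, smul_eq_mul, mul_one] at hlow
        have : (1:ℝ) ≤ f x := by linarith [le_abs_self (f x₃), neg_abs_le (f x₃)]
        linarith [le_abs_self (f x)]
      · have hlow : (∫ t in x₃..x, g t) ≤ ∫ t in x₃..x, (-1:ℝ) := by
          apply intervalIntegral.integral_mono_on hx₃x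
            (hg.intervalIntegrable _ _) (_root_.intervalIntegrable_const)
          intro t ht
          have := hx₃ t ht.1
          rw [hm_def] at this; simp only at this
          rw [abs_of_neg (hs t (hcx₃.trans ht.1))] at this
          linarith
        rw [hftc] at hlow
        simp only [intervalIntegral.integral_const, smul_eq_mul, mul_neg_one] at hlow
        have : f x ≤ -1 := by linarith [le_abs_self (f x₃), neg_abs_le (f x₃)]
        linarith [neg_abs_le (f x)]
    have h2 : (0:ℝ) ≤ 1 / |g x| := by positivity
    linarith

/-- Quantitative Féjer-type bound: if `f` is `C¹` with `f'` eventually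
monotone and eventually nonvanishing, then `|Σ_{n<N} e(f(n))| ≤ C (1/|f'(N)| + |f(N)|)` for
all large `N`. -/
theorem stmt18 (f : ℝ → ℝ) (hf : ContDiff ℝ 1 f) (x₀ : ℝ) (hx₀ : 0 ≤ x₀)
    (hmono : MonotoneOn (deriv f) (Set.Ici x₀) ∨ AntitoneOn (deriv f) (Set.Ici x₀))
    (hne : ∀ x ≥ x₀, deriv f x ≠ 0) :
    ∃ C > (0:ℝ), ∃ N₀ : ℕ, ∀ N : ℕ, N₀ ≤ N →
      ‖∑ n ∈ Finset.range N, e' (f n)‖ ≤ C * (1 / |deriv f N| + |f N|) := by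
  have hg : Continuous (deriv f) := hf.continuous_deriv le_rfl
  have hne' : ∀ x, x₀ ≤ x → deriv f x ≠ 0 := fun x hx => hne x hx
  have hsign := lemSign (deriv f) hg x₀ hne'
  have hwm := lemW (deriv f) x₀ hmono hsign
  obtain ⟨x₄, hx₄c, hLB⟩ := lemLB f hf x₀ hmono hsign
  set A : ℕ := ⌈x₀⌉₊ with hA_def
  have hx₀A : x₀ ≤ (A:ℝ) := Nat.le_ceil x₀
  set K : ℝ := A + |(deriv f (A:ℝ))⁻¹| + 2*Real.pi*|f (A:ℝ)| with hK_def
  have hKnn : 0 ≤ K := by positivity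
  refine ⟨K + 2*Real.pi + 1, by positivity, max A ⌈x₄⌉₊, ?_⟩
  intro N hN
  have hAN : A ≤ N := le_trans (le_max_left _ _) hN
  have hANr : (A:ℝ) ≤ (N:ℝ) := Nat.cast_le.2 hAN
  have hx₄N : x₄ ≤ (N:ℝ) := by
    have h1 : (⌈x₄⌉₊ : ℕ) ≤ N := le_trans (le_max_right _ _) hN
    calc x₄ ≤ (⌈x₄⌉₊ : ℝ) := Nat.le_ceil x₄
      _ ≤ (N:ℝ) := Nat.cast_le.2 h1
  -- split the sum
  have hsplit : (∑ n ∈ Finset.range N, e' (f n))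
      = (∑ n ∈ Finset.range A, e' (f n)) + ∑ n ∈ Finset.Ico A N, e' (f n) := by
    simp only [Finset.range_eq_Ico]
    exact (Finset.sum_Ico_consecutive (fun n => e' (f n)) (Nat.zero_le A) hAN).symm
  have h1 : ‖∑ n ∈ Finset.range A, e' (f n)‖ ≤ (A:ℝ) := by
    calc ‖∑ n ∈ Finset.range A, e' (f n)‖ ≤ ∑ n ∈ Finset.range A, ‖e' (f n)‖ :=
          norm_sum_le _ _
      _ = (A:ℝ) := by
          have : ∀ n ∈ Finset.range A, ‖e' (f n)‖ = 1 := fun n _ => e'_norm (f n)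
          rw [Finset.sum_congr rfl this]
          simp
  have hO := lemO f hf x₀ (A:ℝ) (N:ℝ) hx₀A hANr hne' hwm
  have hS := lemS f hf A N hAN
  have hVar := lemVar f hf x₀ hsign (A:ℝ) (N:ℝ) hx₀A hANr
  have h2 : ‖∑ n ∈ Finset.Ico A N, e' (f n)‖
      ≤ (|(deriv f (A:ℝ))⁻¹| + |(deriv f (N:ℝ))⁻¹|) + 2*Real.pi*(|f (N:ℝ)| + |f (A:ℝ)|) := by
    have htri : ‖∑ n ∈ Finset.Ico A N, e' (f n)‖
        ≤ ‖∫ t in (A:ℝ)..(N:ℝ), e' (f t)‖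
          + ‖(∑ n ∈ Finset.Ico A N, e' (f n)) - ∫ t in (A:ℝ)..(N:ℝ), e' (f t)‖ := by
      have := norm_add_le (∫ t in (A:ℝ)..(N:ℝ), e' (f t))
        ((∑ n ∈ Finset.Ico A N, e' (f n)) - ∫ t in (A:ℝ)..(N:ℝ), e' (f t))
      simpa using this
    have hS' : ‖(∑ n ∈ Finset.Ico A N, e' (f n)) - ∫ t in (A:ℝ)..(N:ℝ), e' (f t)‖
        ≤ 2*Real.pi*(|f (N:ℝ)| + |f (A:ℝ)|) := by
      refine hS.trans ?_
      have hπ : (0:ℝ) ≤ 2*Real.pi := by positivity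
      nlinarith [hVar, intervalIntegral.integral_nonneg (μ := MeasureTheory.volume) hANr
        (fun t _ => abs_nonneg (deriv f t))]
    linarith [htri, hO, hS']
  -- lower bound
  have hR : 1 ≤ 1 / |deriv f (N:ℝ)| + |f (N:ℝ)| := hLB (N:ℝ) hx₄N
  have hwN : |(deriv f (N:ℝ))⁻¹| = 1 / |deriv f (N:ℝ)| := by
    rw [abs_inv, inv_eq_one_div]
  have hu : (0:ℝ) ≤ 1 / |deriv f (N:ℝ)| := by positivity
  have hv : (0:ℝ) ≤ |f (N:ℝ)| := abs_nonneg _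
  have htotal : ‖∑ n ∈ Finset.range N, e' (f n)‖
      ≤ K + 1 / |deriv f (N:ℝ)| + 2*Real.pi*|f (N:ℝ)| := by
    rw [hsplit]
    calc ‖(∑ n ∈ Finset.range A, e' (f n)) + ∑ n ∈ Finset.Ico A N, e' (f n)‖
        ≤ ‖∑ n ∈ Finset.range A, e' (f n)‖ + ‖∑ n ∈ Finset.Ico A N, e' (f n)‖ :=
          norm_add_le _ _
      _ ≤ K + 1 / |deriv f (N:ℝ)| + 2*Real.pi*|f (N:ℝ)| := by
          rw [hK_def, ← hwN]
          have hπ : (0:ℝ) < Real.pi := Real.pi_pos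
          nlinarith [h1, h2]
  refine htotal.trans ?_
  have hπ : (0:ℝ) < Real.pi := Real.pi_pos
  nlinarith [mul_nonneg hKnn (by linarith : (0:ℝ) ≤ 1 / |deriv f (N:ℝ)| + |f (N:ℝ)| - 1)]

end
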